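/- arXiv:1504.03716 — 4 statements merged into one kernel-verified Lean document; each statement's English description precedes it below -/
import Mathlib

section
/- Let s ≥ 1 and let (h_ε)_{ε∈(0,1]} be a γ^s-moderate net of functions on ℝⁿ such that there exists a compact set K ⊂ ℝⁿ with supp h_ε ⊆ K for all ε ∈ (0,1]. Then there exist constants c, c′ > 0 and N ∈ ℕ such that |ĥ_ε(ξ)| ≤ c′ ε^{−N} exp(−c ε^{1/s} ⟨ξ⟩^{1/s}) for all ξ ∈ ℝⁿ and all ε ∈ (0,1]. -/
noncomputable section

open MeasureTheory Real Filter Finset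

/-- `ℝⁿ` as a Euclidean space. -/
abbrev Vn (n : ℕ) := EuclideanSpace ℝ (Fin n)

/-- Directional derivative along the `i`-th coordinate. -/
noncomputable def dirDeriv {n : ℕ} {F : Type*} [NormedAddCommGroup F] [NormedSpace ℝ F]
    (i : Fin n) (f : Vn n → F) : Vn n → F :=
  fun x => fderiv ℝ f x (EuclideanSpace.single i 1)

/-- Iterated partial derivative `∂^α` for a multi-index `α`. -/
noncomputable def multiDeriv {n : ℕ} {F : Type*} [NormedAddCommGroup F] [NormedSpace ℝ F]
    (α : Fin n → ℕ) (f : Vn n → F) : Vn n → F :=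
  (List.finRange n).foldr (fun i g => (dirDeriv i)^[α i] g) f

/-- `|α| = ∑ α i`. -/
def mOrder {n : ℕ} (α : Fin n → ℕ) : ℕ := ∑ i, α i

/-- `α! = ∏ (α i)!`. -/
def mFactorial {n : ℕ} (α : Fin n → ℕ) : ℕ := ∏ i, Nat.factorial (α i)

/-- Japanese bracket `⟨ξ⟩ = (1+|ξ|²)^{1/2}`. -/
noncomputable def jap {n : ℕ} (ξ : Vn n) : ℝ := Real.sqrt (1 + ‖ξ‖^2)

/-- The Gevrey class `γ^s(ℝⁿ)` (with values in a normed space): `f` is smooth and on every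
compact set `K` there is `C > 0` with `‖∂^α f(x)‖ ≤ C^{|α|+1} (α!)^s` on `K`. -/
def IsGevrey {n : ℕ} {F : Type*} [NormedAddCommGroup F] [NormedSpace ℝ F]
    (s : ℝ) (f : Vn n → F) : Prop :=
  ContDiff ℝ (⊤ : ℕ∞) f ∧ ∀ K : Set (Vn n), IsCompact K → ∃ C > 0, ∀ (α : Fin n → ℕ), ∀ x ∈ K,
    ‖multiDeriv α f x‖ ≤ C ^ (mOrder α + 1) * (mFactorial α : ℝ) ^ s

/-- A net `(h_ε)_{ε∈(0,1]}` in `γ^s(ℝⁿ)` is `γ^s`-moderate: for every compact `K` there are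
`c_K > 0` and `N ∈ ℕ` with `‖∂^α h_ε(x)‖ ≤ c_K^{|α|+1} (α!)^s ε^{−N−|α|}` for all `α`, `x ∈ K`,
`ε ∈ (0,1]`. -/
def GsModerate {n : ℕ} (s : ℝ) (h : ℝ → Vn n → ℂ) : Prop :=
  ∀ K : Set (Vn n), IsCompact K → ∃ c > (0:ℝ), ∃ N : ℕ,
    ∀ (α : Fin n → ℕ), ∀ x ∈ K, ∀ ε ∈ Set.Ioc (0:ℝ) 1,
      ‖multiDeriv α (h ε) x‖ ≤
        c ^ (mOrder α + 1) * (mFactorial α : ℝ) ^ s * ε ^ (-(N:ℝ) - (mOrder α : ℝ))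

namespace Test
open Complex FourierTransform
variable {n : ℕ}

lemma foldr_eq_self {F : Type*} [NormedAddCommGroup F] [NormedSpace ℝ F]
    (α : Fin n → ℕ) (f : Vn n → F) (l : List (Fin n)) (hl : ∀ j ∈ l, α j = 0) :
    l.foldr (fun i g => (dirDeriv i)^[α i] g) f = f := by
  induction l with
  | nil => rfl
  | cons a t ih =>
    simp only [List.foldr_cons, ih (fun j hj => hl j (List.mem_cons_of_mem a hj)),
      hl a List.mem_cons_self, Function.iterate_zero_apply]

lemma foldr_single {F : Type*} [NormedAddCommGroup F] [NormedSpace ℝ F]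
    (i : Fin n) (k : ℕ) (f : Vn n → F) (l : List (Fin n)) (hi : i ∈ l) (hn : l.Nodup) :
    l.foldr (fun j g => (dirDeriv j)^[(Pi.single i k : Fin n → ℕ) j] g) f = (dirDeriv i)^[k] f := by
  induction l with
  | nil => simp at hi
  | cons a t ih =>
    rcases List.nodup_cons.mp hn with ⟨ha, ht⟩
    rcases eq_or_ne a i with rfl | hne
    · have : t.foldr (fun j g => (dirDeriv j)^[(Pi.single a k : Fin n → ℕ) j] g) f = f :=
        foldr_eq_self _ _ _ (fun j hj => by
          have hja : j ≠ a := fun hji => ha (hji ▸ hj)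
          simp [hja])
      simp [List.foldr_cons, this, Pi.single_eq_same]
    · have hit : i ∈ t := by
        rcases List.mem_cons.mp hi with h1 | h1
        · exact absurd h1.symm hne
        · exact h1
      simp [List.foldr_cons, ih hit ht, Pi.single_eq_of_ne hne, Function.iterate_zero_apply]

lemma multiDeriv_single {F : Type*} [NormedAddCommGroup F] [NormedSpace ℝ F]
    (i : Fin n) (k : ℕ) (f : Vn n → F) :
    multiDeriv (Pi.single i k) f = (dirDeriv i)^[k] f :=
  foldr_single i k f _ (List.mem_finRange i) (List.nodup_finRange n)

lemma multiDeriv_zero {F : Type*} [NormedAddCommGroup F] [NormedSpace ℝ F] (f : Vn n → F) :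
    multiDeriv (fun _ => 0) f = f :=
  foldr_eq_self _ _ _ (fun _ _ => rfl)

lemma contDiff_dirDeriv (i : Fin n) {f : Vn n → ℂ} (hf : ContDiff ℝ (⊤:ℕ∞) f) :
    ContDiff ℝ (⊤:ℕ∞) (dirDeriv i f) :=
  (hf.fderiv_right (by simp)).clm_apply contDiff_const

lemma contDiff_iter (i : Fin n) (k : ℕ) {f : Vn n → ℂ} (hf : ContDiff ℝ (⊤:ℕ∞) f) :
    ContDiff ℝ (⊤:ℕ∞) ((dirDeriv i)^[k] f) := by
  induction k with
  | zero => exact hf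
  | succ k ih => rw [Function.iterate_succ_apply']; exact contDiff_dirDeriv i ih

lemma tsupport_dirDeriv (i : Fin n) (f : Vn n → ℂ) :
    tsupport (dirDeriv i f) ⊆ tsupport f := by
  refine closure_minimal (fun x hx => ?_) isClosed_closure
  have : fderiv ℝ f x ≠ 0 := by
    intro h0
    exact hx (by simp [dirDeriv, h0])
  exact support_fderiv_subset ℝ this

lemma tsupport_iter (i : Fin n) (k : ℕ) (f : Vn n → ℂ) :
    tsupport ((dirDeriv i)^[k] f) ⊆ tsupport f := by
  induction k with
  | zero => exact subset_rfl
  | succ k ih =>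
    rw [Function.iterate_succ_apply']
    exact (tsupport_dirDeriv i _).trans ih

lemma hcs_iter (i : Fin n) (k : ℕ) {f : Vn n → ℂ} (hf : HasCompactSupport f) :
    HasCompactSupport ((dirDeriv i)^[k] f) :=
  IsCompact.of_isClosed_subset hf isClosed_closure (tsupport_iter i k f)

end Test

namespace Test2
open Complex FourierTransform Test
variable {n : ℕ}

lemma fourier_dirDeriv {f : Vn n → ℂ} (hf : ContDiff ℝ (⊤:ℕ∞) f) (hc : HasCompactSupport f)
    (i : Fin n) (ξ : Vn n) :
    FourierTransform.fourier (dirDeriv i f) ξ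
      = (2 * (π:ℂ) * Complex.I * (ξ i : ℂ)) * FourierTransform.fourier f ξ := by
  have hint : Integrable f := hf.continuous.integrable_of_hasCompactSupport hc
  have hd : Differentiable ℝ f := hf.differentiable (by simp)
  have hfd : ContDiff ℝ (⊤:ℕ∞) (fderiv ℝ f) := hf.fderiv_right (by simp)
  have hint' : Integrable (fderiv ℝ f) :=
    hfd.continuous.integrable_of_hasCompactSupport (hc.fderiv (𝕜 := ℝ))
  have h1 : FourierTransform.fourier (dirDeriv i f) ξ
      = FourierTransform.fourier (fderiv ℝ f) ξ (EuclideanSpace.single i 1) :=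
    (Real.fourier_continuousLinearMap_apply hint').symm
  rw [h1, Real.fourier_fderiv hint hd hint']
  have h2 : (innerSL ℝ ξ) (EuclideanSpace.single i 1) = ξ i := by
    simp [EuclideanSpace.inner_single_right]
  simp only [VectorFourier.fourierSMulRight_apply, ContinuousLinearMap.neg_apply, h2]
  simp only [neg_smul, smul_neg, neg_neg, smul_eq_mul, Complex.real_smul]
  ring

lemma fourier_iter {f : Vn n → ℂ} (hf : ContDiff ℝ (⊤:ℕ∞) f) (hc : HasCompactSupport f)
    (i : Fin n) (k : ℕ) (ξ : Vn n) :
    FourierTransform.fourier ((dirDeriv i)^[k] f) ξ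
      = (2 * (π:ℂ) * Complex.I * (ξ i : ℂ)) ^ k * FourierTransform.fourier f ξ := by
  induction k with
  | zero => simp
  | succ k ih =>
    rw [Function.iterate_succ_apply',
      fourier_dirDeriv (contDiff_iter i k hf) (hcs_iter i k hc) i ξ, ih, pow_succ]
    ring

lemma norm_fourier_iter {f : Vn n → ℂ} (hf : ContDiff ℝ (⊤:ℕ∞) f) (hc : HasCompactSupport f)
    (i : Fin n) (k : ℕ) (ξ : Vn n) :
    (2 * π * |ξ i|) ^ k * ‖FourierTransform.fourier f ξ‖
      = ‖FourierTransform.fourier ((dirDeriv i)^[k] f) ξ‖ := by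
  rw [fourier_iter hf hc i k ξ, norm_mul, norm_pow]
  congr 2
  rw [norm_mul, norm_mul, norm_mul]
  simp [Complex.norm_real, Real.norm_eq_abs, abs_of_pos Real.pi_pos]

lemma norm_fourier_le (f : Vn n → ℂ) (ξ : Vn n) :
    ‖FourierTransform.fourier f ξ‖ ≤ ∫ x, ‖f x‖ :=
  VectorFourier.norm_fourierIntegral_le_integral_norm _ _ _ _ _

end Test2

namespace Test3

lemma keyOpt {s : ℝ} (hs : 1 ≤ s) {t : ℝ} (ht : 0 < t) :
    ∃ k : ℕ, (Nat.factorial k : ℝ) ^ s ≤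
      t ^ k * (2 * Real.exp (-(Real.log 2 / 2) * t ^ (1/s))) := by
  have hs0 : (0:ℝ) < s := lt_of_lt_of_le one_pos hs
  set u := t ^ (1/s) with hu
  have hu0 : 0 < u := Real.rpow_pos_of_pos ht _
  refine ⟨⌊u/2⌋₊, ?_⟩
  set k := ⌊u/2⌋₊ with hk
  have h1 : (Nat.factorial k : ℝ) ^ s ≤ (t/2) ^ k := by
    rcases Nat.eq_zero_or_pos k with h0 | hpos
    · simp [h0]
    · have hk2 : (k:ℝ) ≤ u/2 := Nat.floor_le (by positivity)
      have e1 : (Nat.factorial k : ℝ) ≤ (k:ℝ)^k := by exact_mod_cast Nat.factorial_le_pow k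
      have e2 : (Nat.factorial k:ℝ)^s ≤ ((k:ℝ)^k)^s :=
        Real.rpow_le_rpow (by positivity) e1 hs0.le
      have e3 : ((k:ℝ)^k)^s = ((k:ℝ)^s)^k := by
        rw [← Real.rpow_natCast ((k:ℝ)) k, ← Real.rpow_mul (by positivity), mul_comm,
          Real.rpow_mul (by positivity), Real.rpow_natCast]
      have hus : u^s = t := by
        rw [hu, ← Real.rpow_mul ht.le, one_div, inv_mul_cancel₀ (ne_of_gt hs0), Real.rpow_one]
      have e4 : (k:ℝ)^s ≤ t/2 := by
        have e5 : (k:ℝ)^s ≤ (u/2)^s := Real.rpow_le_rpow (by positivity) hk2 hs0.le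
        refine e5.trans ?_
        have h2s : (2:ℝ) ≤ (2:ℝ)^s := by
          calc (2:ℝ) = 2^(1:ℝ) := (Real.rpow_one 2).symm
          _ ≤ 2^s := Real.rpow_le_rpow_of_exponent_le one_le_two hs
        rw [Real.div_rpow hu0.le (by norm_num), hus]
        exact div_le_div_of_nonneg_left ht.le (by norm_num) h2s
      calc (Nat.factorial k : ℝ) ^ s ≤ ((k:ℝ)^s)^k := e3 ▸ e2
        _ ≤ (t/2)^k := pow_le_pow_left₀ (by positivity) e4 k
  refine h1.trans ?_
  have h2 : ((2:ℝ)^k)⁻¹ ≤ 2 * Real.exp (-(Real.log 2 / 2) * u) := by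
    have hlt : u/2 < (k:ℝ) + 1 := Nat.lt_floor_add_one (u/2)
    have e6 : ((2:ℝ)^k)⁻¹ = Real.exp (-(k * Real.log 2)) := by
      rw [Real.exp_neg, Real.exp_nat_mul, Real.exp_log (by norm_num)]
    have e7 : (2:ℝ) * Real.exp (-(Real.log 2 / 2) * u)
        = Real.exp (Real.log 2 + -(Real.log 2 / 2) * u) := by
      rw [Real.exp_add, Real.exp_log (by norm_num)]
    rw [e6, e7]
    apply Real.exp_le_exp.mpr
    have hlog : (0:ℝ) < Real.log 2 := Real.log_pos (by norm_num)
    nlinarith [mul_lt_mul_of_pos_left hlt hlog]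
  calc (t/2)^k = t^k * ((2:ℝ)^k)⁻¹ := by rw [div_pow]; ring
    _ ≤ t^k * (2 * Real.exp (-(Real.log 2 / 2) * u)) := by
        exact mul_le_mul_of_nonneg_left h2 (by positivity)

end Test3

set_option maxHeartbeats 1600000 in
/-- Let `s ≥ 1` and let `(h_ε)_{ε∈(0,1]}` be a `γ^s`-moderate net of Gevrey
functions on `ℝⁿ`, all supported in a fixed compact set `K`. Then there are `c, c' > 0` and
`N ∈ ℕ` with `|ĥ_ε(ξ)| ≤ c' ε^{−N} exp(−c ε^{1/s} ⟨ξ⟩^{1/s})` for all `ξ` and `ε ∈ (0,1]`. -/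
theorem gsModerate_fourier_decay
    (n : ℕ) (s : ℝ) (hs : 1 ≤ s) (h : ℝ → Vn n → ℂ)
    (hsmooth : ∀ ε ∈ Set.Ioc (0:ℝ) 1, IsGevrey s (h ε))
    (hmod : GsModerate s h)
    (K : Set (Vn n)) (hK : IsCompact K)
    (hsupp : ∀ ε ∈ Set.Ioc (0:ℝ) 1, tsupport (h ε) ⊆ K) :
    ∃ c > (0:ℝ), ∃ c' > (0:ℝ), ∃ N : ℕ, ∀ ε ∈ Set.Ioc (0:ℝ) 1, ∀ ξ : Vn n,
      ‖FourierTransform.fourier (h ε) ξ‖ ≤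
        c' * ε ^ (-(N:ℝ)) * Real.exp (-c * ε ^ (1/s) * jap ξ ^ (1/s)) := by
  classical
  obtain ⟨c₀, hc₀, N, hbound⟩ := hmod K hK
  set c₁ : ℝ := max c₀ 1 with hc₁def
  have hc₁1 : (1:ℝ) ≤ c₁ := le_max_right _ _
  have hc₁0 : (0:ℝ) < c₁ := lt_of_lt_of_le one_pos hc₁1
  set V : ℝ := (volume K).toReal with hVdef
  have hV0 : (0:ℝ) ≤ V := ENNReal.toReal_nonneg
  have hs0 : (0:ℝ) < s := lt_of_lt_of_le one_pos hs
  -- pointwise bounds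
  have key1 : ∀ ε ∈ Set.Ioc (0:ℝ) 1, ∀ (i : Fin n) (k : ℕ), ∀ x ∈ K,
      ‖(dirDeriv i)^[k] (h ε) x‖
        ≤ c₁^(k+1) * (Nat.factorial k : ℝ)^s * ε ^ (-(N:ℝ) - (k:ℝ)) := by
    intro ε hε i k x hx
    have hb := hbound (Pi.single i k) x hx ε hε
    rw [Test.multiDeriv_single] at hb
    have hmo : mOrder (Pi.single i k) = k := by
      simp [mOrder]
    have hmf : mFactorial (Pi.single i k) = Nat.factorial k := by
      unfold mFactorial
      rw [Finset.prod_eq_single i (fun j _ hj => by simp [Pi.single_eq_of_ne hj])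
        (fun hi => absurd (Finset.mem_univ i) hi)]
      simp
    rw [hmo, hmf] at hb
    refine hb.trans ?_
    have hA : (0:ℝ) ≤ (Nat.factorial k:ℝ)^s := Real.rpow_nonneg (Nat.cast_nonneg _) _
    have hB : (0:ℝ) ≤ ε ^ (-(N:ℝ)-(k:ℝ)) := Real.rpow_nonneg hε.1.le _
    have hpow : c₀^(k+1) ≤ c₁^(k+1) := pow_le_pow_left₀ hc₀.le (le_max_left _ _) _
    exact mul_le_mul_of_nonneg_right (mul_le_mul_of_nonneg_right hpow hA) hB
  have key0 : ∀ ε ∈ Set.Ioc (0:ℝ) 1, ∀ x ∈ K, ‖h ε x‖ ≤ c₁ * ε ^ (-(N:ℝ)) := by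
    intro ε hε x hx
    have hb := hbound (fun _ => 0) x hx ε hε
    rw [Test.multiDeriv_zero] at hb
    have h1 : mOrder (fun _ : Fin n => 0) = 0 := by simp [mOrder]
    have h2 : mFactorial (fun _ : Fin n => 0) = 1 := by simp [mFactorial]
    rw [h1, h2] at hb
    simp only [pow_one, Nat.cast_one, Real.one_rpow, mul_one, Nat.cast_zero, sub_zero] at hb
    calc ‖h ε x‖ ≤ c₀ * ε ^ (-(N:ℝ)) := by simpa using hb
      _ ≤ c₁ * ε ^ (-(N:ℝ)) := by
          gcongr
          · exact Real.rpow_nonneg (le_of_lt (lt_of_lt_of_le hε.1 le_rfl)) _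
          · exact le_max_left _ _
  -- integral bound
  have intbound : ∀ ε ∈ Set.Ioc (0:ℝ) 1, ∀ g : Vn n → ℂ, Continuous g →
      tsupport g ⊆ K → ∀ C : ℝ, (∀ x ∈ K, ‖g x‖ ≤ C) → (∫ x, ‖g x‖) ≤ C * V := by
    intro ε hε g hgc hgs C hC
    have hz : ∀ x ∉ K, ‖g x‖ = 0 := fun x hx => by
      have : g x = 0 := image_eq_zero_of_notMem_tsupport (fun hxx => hx (hgs hxx))
      simp [this]
    rw [← setIntegral_eq_integral_of_forall_compl_eq_zero hz]
    have hb := norm_setIntegral_le_of_norm_le_const (μ := volume) (s := K) hK.measure_lt_top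
      (f := fun x => ‖g x‖) (C := C)
      (fun x hx => by simpa using hC x hx)
    exact le_trans (le_abs_self _) (by simpa [Real.norm_eq_abs, hVdef, measureReal_def] using hb)
  -- constants
  set D : ℝ := max (c₁ * Real.sqrt n / (2*π)) 1 with hDdef
  have hD1 : (1:ℝ) ≤ D := le_max_right _ _
  have hD0 : (0:ℝ) < D := lt_of_lt_of_le one_pos hD1
  set c : ℝ := Real.log 2 / (4*D) with hcdef
  have hcpos : 0 < c := div_pos (Real.log_pos (by norm_num)) (by linarith)
  set c' : ℝ := 2*(V*c₁) + V*c₁*Real.exp (2*c) + 1 with hc'def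
  have hc'pos : 0 < c' := by positivity
  refine ⟨c, hcpos, c', hc'pos, N, ?_⟩
  intro ε hε ξ
  have hε0 : 0 < ε := hε.1
  have hsm : ContDiff ℝ (⊤:ℕ∞) (h ε) := (hsmooth ε hε).1
  have hcsupp : HasCompactSupport (h ε) :=
    hK.of_isClosed_subset isClosed_closure (hsupp ε hε)
  -- basic jap facts
  have hjap1 : 1 ≤ jap ξ := by
    have h1 : (1:ℝ) ≤ 1 + ‖ξ‖^2 := by nlinarith [sq_nonneg ‖ξ‖]
    calc (1:ℝ) = Real.sqrt 1 := by simp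
      _ ≤ Real.sqrt (1 + ‖ξ‖^2) := Real.sqrt_le_sqrt h1
      _ = jap ξ := rfl
  have hjap0 : 0 < jap ξ := lt_of_lt_of_le one_pos hjap1
  have hinv_s : 1/s ≤ 1 := by
    rw [div_le_one hs0]; exact hs
  have hinv_s0 : 0 < 1/s := by positivity
  have P0 : ‖FourierTransform.fourier (h ε) ξ‖ ≤ (V * c₁) * ε ^ (-(N:ℝ)) := by
    refine (Test2.norm_fourier_le _ ξ).trans ?_
    have := intbound ε hε (h ε) hsm.continuous (hsupp ε hε) (c₁ * ε ^ (-(N:ℝ))) (key0 ε hε)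
    linarith [this]
  by_cases hξ : ‖ξ‖ ≤ 1
  · -- small frequencies
    have hjap2 : jap ξ ≤ 2 := by
      rw [jap, show (2:ℝ) = Real.sqrt 4 by rw [show (4:ℝ) = 2^2 by norm_num, Real.sqrt_sq (by norm_num)]]
      have hx2 : ‖ξ‖^2 ≤ 1 := by nlinarith [norm_nonneg ξ]
      exact Real.sqrt_le_sqrt (by nlinarith)
    have hj1 : jap ξ ^ (1/s) ≤ 2 := by
      calc jap ξ ^ (1/s) ≤ jap ξ ^ (1:ℝ) :=
            Real.rpow_le_rpow_of_exponent_le hjap1 hinv_s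
        _ = jap ξ := Real.rpow_one _
        _ ≤ 2 := hjap2
    have he1 : ε ^ (1/s) ≤ 1 := Real.rpow_le_one hε0.le hε.2 (by positivity)
    have hj0 : 0 ≤ jap ξ ^ (1/s) := Real.rpow_nonneg hjap0.le _
    have he0 : 0 ≤ ε ^ (1/s) := Real.rpow_nonneg hε0.le _
    have hm : ε^(1/s) * jap ξ^(1/s) ≤ 2 := by
      have := mul_le_mul he1 hj1 hj0 zero_le_one
      linarith
    have harg : -(2*c) ≤ -c * ε^(1/s) * jap ξ ^ (1/s) := by
      have := mul_le_mul_of_nonneg_left hm hcpos.le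
      nlinarith
    have hone : Real.exp (2*c) * Real.exp (-(2*c)) = 1 := by
      rw [← Real.exp_add]; simp
    calc ‖FourierTransform.fourier (h ε) ξ‖ ≤ (V * c₁) * ε ^ (-(N:ℝ)) := P0
      _ = (V*c₁*Real.exp (2*c)) * ε ^ (-(N:ℝ)) * Real.exp (-(2*c)) := by
          rw [show (V*c₁*Real.exp (2*c)) * ε ^ (-(N:ℝ)) * Real.exp (-(2*c))
            = (V*c₁) * ε ^ (-(N:ℝ)) * (Real.exp (2*c) * Real.exp (-(2*c))) by ring, hone, mul_one]
      _ ≤ c' * ε ^ (-(N:ℝ)) * Real.exp (-c * ε^(1/s) * jap ξ ^ (1/s)) := by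
          have h1 : V*c₁*Real.exp (2*c) ≤ c' := by
            rw [hc'def]; nlinarith [Real.exp_pos (2*c)]
          have h2 : Real.exp (-(2*c)) ≤ Real.exp (-c * ε^(1/s) * jap ξ ^ (1/s)) :=
            Real.exp_le_exp.mpr harg
          have h3 : (0:ℝ) ≤ ε ^ (-(N:ℝ)) := Real.rpow_nonneg hε0.le _
          have h4 : (0:ℝ) ≤ V*c₁*Real.exp (2*c) := by positivity
          calc (V*c₁*Real.exp (2*c)) * ε ^ (-(N:ℝ)) * Real.exp (-(2*c))
              ≤ (V*c₁*Real.exp (2*c)) * ε ^ (-(N:ℝ)) * Real.exp (-c * ε^(1/s) * jap ξ ^ (1/s)) := by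
                gcongr
            _ ≤ c' * ε ^ (-(N:ℝ)) * Real.exp (-c * ε^(1/s) * jap ξ ^ (1/s)) := by
                gcongr
  · -- large frequencies
    push_neg at hξ
    have hn0 : n ≠ 0 := by
      rintro rfl
      have : ‖ξ‖ = 0 := by
        rw [EuclideanSpace.norm_eq]
        simp
      linarith
    have : Nonempty (Fin n) := Fin.pos_iff_nonempty.mp (Nat.pos_of_ne_zero hn0)
    obtain ⟨i, -, hi⟩ := Finset.exists_max_image Finset.univ (fun j => |ξ j|)
      Finset.univ_nonempty
    have hnorm : ‖ξ‖ ≤ Real.sqrt n * |ξ i| := by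
      rw [EuclideanSpace.norm_eq]
      have h1 : ∑ j, ‖ξ j‖^2 ≤ (n:ℝ) * |ξ i|^2 := by
        calc ∑ j, ‖ξ j‖^2 ≤ ∑ _j : Fin n, |ξ i|^2 := by
              refine Finset.sum_le_sum (fun j _ => ?_)
              rw [Real.norm_eq_abs]
              exact pow_le_pow_left₀ (abs_nonneg _) (hi j (Finset.mem_univ j)) 2
          _ = (n:ℝ) * |ξ i|^2 := by simp [mul_comm]
      calc Real.sqrt (∑ j, ‖ξ j‖^2) ≤ Real.sqrt ((n:ℝ) * |ξ i|^2) := Real.sqrt_le_sqrt h1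
        _ = Real.sqrt n * |ξ i| := by
            rw [Real.sqrt_mul (Nat.cast_nonneg n), Real.sqrt_sq (abs_nonneg _)]
    have hξi : 0 < |ξ i| := by
      nlinarith [Real.sqrt_nonneg (n:ℝ), abs_nonneg (ξ i)]
    set a : ℝ := 2*π*|ξ i| with hadef
    have ha : 0 < a := by positivity
    set t : ℝ := ε * ‖ξ‖ / D with htdef
    have ht : 0 < t := by
      apply div_pos (mul_pos hε0 (lt_trans one_pos hξ)) hD0
    obtain ⟨k, hkey⟩ := Test3.keyOpt hs ht
    set E : ℝ := 2 * Real.exp (-(Real.log 2/2) * t^(1/s)) with hEdef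
    have hE0 : 0 < E := by positivity
    have hta : t * c₁ ≤ a * ε := by
      have h2 : c₁ * Real.sqrt n / (2*π) ≤ D := le_max_left _ _
      have h3 : c₁ * ‖ξ‖ ≤ c₁ * (Real.sqrt n * |ξ i|) :=
        mul_le_mul_of_nonneg_left hnorm hc₁0.le
      have h4 : c₁ * (Real.sqrt n * |ξ i|) = 2*π*|ξ i| * (c₁ * Real.sqrt n / (2*π)) := by
        field_simp
      have h5 : c₁ * ‖ξ‖ ≤ a * D := by
        rw [hadef]
        calc c₁ * ‖ξ‖ ≤ 2*π*|ξ i| * (c₁ * Real.sqrt n / (2*π)) := h4 ▸ h3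
          _ ≤ 2*π*|ξ i| * D := mul_le_mul_of_nonneg_left h2 (by positivity)
      calc t * c₁ = ε * (c₁ * ‖ξ‖) / D := by rw [htdef]; ring
        _ ≤ ε * (a * D) / D := by gcongr
        _ = a * ε := by rw [div_eq_iff (ne_of_gt hD0)]; ring
    have P : a^k * ‖FourierTransform.fourier (h ε) ξ‖
        ≤ c₁^(k+1) * (Nat.factorial k : ℝ)^s * ε ^ (-(N:ℝ)-(k:ℝ)) * V := by
      rw [hadef, Test2.norm_fourier_iter hsm hcsupp i k ξ]
      refine (Test2.norm_fourier_le _ ξ).trans ?_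
      have hgc : Continuous ((dirDeriv i)^[k] (h ε)) := (Test.contDiff_iter i k hsm).continuous
      have hgs : tsupport ((dirDeriv i)^[k] (h ε)) ⊆ K :=
        (Test.tsupport_iter i k (h ε)).trans (hsupp ε hε)
      exact intbound ε hε _ hgc hgs _ (key1 ε hε i k)
    have hrw : c₁^(k+1) * (Nat.factorial k : ℝ)^s * ε ^ (-(N:ℝ)-(k:ℝ)) * V
        = (V*c₁) * ε ^ (-(N:ℝ)) * ((Nat.factorial k : ℝ)^s * (c₁/ε)^k) := by
      rw [Real.rpow_sub hε0, Real.rpow_natCast, div_pow, pow_succ]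
      simp only [div_eq_mul_inv]
      ring
    have main2 : ‖FourierTransform.fourier (h ε) ξ‖ ≤ (V*c₁) * ε ^ (-(N:ℝ)) * E := by
      have hchain : a^k * ‖FourierTransform.fourier (h ε) ξ‖
          ≤ a^k * ((V*c₁) * ε ^ (-(N:ℝ)) * E) := by
        calc a^k * ‖FourierTransform.fourier (h ε) ξ‖
            ≤ (V*c₁) * ε ^ (-(N:ℝ)) * ((Nat.factorial k : ℝ)^s * (c₁/ε)^k) := by
              rw [← hrw]; exact P
          _ ≤ (V*c₁) * ε ^ (-(N:ℝ)) * ((t^k * E) * (c₁/ε)^k) := by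
              have hnn1 : (0:ℝ) ≤ (V*c₁) * ε ^ (-(N:ℝ)) :=
                mul_nonneg (mul_nonneg hV0 hc₁0.le) (Real.rpow_nonneg hε0.le _)
              have hnn2 : (0:ℝ) ≤ (c₁/ε)^k := by positivity
              exact mul_le_mul_of_nonneg_left
                (mul_le_mul_of_nonneg_right hkey hnn2) hnn1
          _ = (V*c₁) * ε ^ (-(N:ℝ)) * E * (t*c₁/ε)^k := by
              rw [mul_div_assoc, mul_pow]
              ring
          _ ≤ (V*c₁) * ε ^ (-(N:ℝ)) * E * a^k := by
              have hbase : t*c₁/ε ≤ a := by rw [div_le_iff₀ hε0]; exact hta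
              have h0 : (0:ℝ) ≤ t*c₁/ε := by positivity
              have hnn : (0:ℝ) ≤ (V*c₁) * ε ^ (-(N:ℝ)) * E :=
                mul_nonneg (mul_nonneg (mul_nonneg hV0 hc₁0.le)
                  (Real.rpow_nonneg hε0.le _)) hE0.le
              exact mul_le_mul_of_nonneg_left (pow_le_pow_left₀ h0 hbase k) hnn
          _ = a^k * ((V*c₁) * ε ^ (-(N:ℝ)) * E) := by ring
      exact le_of_mul_le_mul_left hchain (pow_pos ha k)
    -- exponent comparison
    have hexp : -(Real.log 2/2) * t^(1/s) ≤ -c * ε^(1/s) * jap ξ^(1/s) := by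
      have hjle : jap ξ ≤ Real.sqrt 2 * ‖ξ‖ := by
        rw [jap]
        calc Real.sqrt (1 + ‖ξ‖^2) ≤ Real.sqrt (2 * ‖ξ‖^2) := by
              apply Real.sqrt_le_sqrt; nlinarith
          _ = Real.sqrt 2 * ‖ξ‖ := by
              rw [Real.sqrt_mul (by norm_num), Real.sqrt_sq (norm_nonneg _)]
      have hnn : (0:ℝ) ≤ ‖ξ‖ := norm_nonneg _
      have hj2 : jap ξ^(1/s) ≤ 2 * ‖ξ‖^(1/s) := by
        calc jap ξ^(1/s) ≤ (Real.sqrt 2 * ‖ξ‖)^(1/s) :=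
              Real.rpow_le_rpow hjap0.le hjle hinv_s0.le
          _ = (Real.sqrt 2)^(1/s) * ‖ξ‖^(1/s) := Real.mul_rpow (Real.sqrt_nonneg 2) hnn
          _ ≤ 2 * ‖ξ‖^(1/s) := by
              have hsq : Real.sqrt 2 ^ 2 = 2 := Real.sq_sqrt (by norm_num)
              have h2 : Real.sqrt 2 ≤ 2 := by nlinarith [Real.sqrt_nonneg 2]
              have h1b : (1:ℝ) ≤ Real.sqrt 2 := by nlinarith [Real.sqrt_nonneg 2]
              have h1 : (Real.sqrt 2)^(1/s) ≤ 2 := by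
                calc (Real.sqrt 2)^(1/s) ≤ (Real.sqrt 2)^(1:ℝ) :=
                      Real.rpow_le_rpow_of_exponent_le h1b hinv_s
                  _ = Real.sqrt 2 := Real.rpow_one _
                  _ ≤ 2 := h2
              exact mul_le_mul_of_nonneg_right h1 (Real.rpow_nonneg hnn _)
      have ht2 : ε^(1/s) * ‖ξ‖^(1/s) / D ≤ t^(1/s) := by
        rw [htdef, Real.div_rpow (by positivity) hD0.le, Real.mul_rpow hε0.le hnn]
        have hD2 : D^(1/s) ≤ D := by
          calc D^(1/s) ≤ D^(1:ℝ) := Real.rpow_le_rpow_of_exponent_le hD1 hinv_s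
            _ = D := Real.rpow_one _
        have hnum : (0:ℝ) ≤ ε^(1/s) * ‖ξ‖^(1/s) :=
          mul_nonneg (Real.rpow_nonneg hε0.le _) (Real.rpow_nonneg hnn _)
        exact div_le_div_of_nonneg_left hnum (Real.rpow_pos_of_pos hD0 _) hD2
      have he0 : 0 ≤ ε ^ (1/s) := Real.rpow_nonneg hε0.le _
      have hcalc : c * (ε^(1/s) * jap ξ^(1/s)) ≤ (Real.log 2/2) * t^(1/s) := by
        calc c * (ε^(1/s) * jap ξ^(1/s)) ≤ c * (ε^(1/s) * (2 * ‖ξ‖^(1/s))) := by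
              gcongr
          _ = (Real.log 2/2) * (ε^(1/s) * ‖ξ‖^(1/s) / D) := by
              rw [hcdef]; field_simp; ring
          _ ≤ (Real.log 2/2) * t^(1/s) := by
              have hl2 : (0:ℝ) ≤ Real.log 2 / 2 := by positivity
              exact mul_le_mul_of_nonneg_left ht2 hl2
      nlinarith [hcalc]
    calc ‖FourierTransform.fourier (h ε) ξ‖ ≤ (V*c₁) * ε ^ (-(N:ℝ)) * E := main2
      _ = (2*(V*c₁)) * ε ^ (-(N:ℝ)) * Real.exp (-(Real.log 2/2) * t^(1/s)) := by
          rw [hEdef]; ring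
      _ ≤ c' * ε ^ (-(N:ℝ)) * Real.exp (-c * ε^(1/s) * jap ξ^(1/s)) := by
          have h1 : 2*(V*c₁) ≤ c' := by
            rw [hc'def]; nlinarith [Real.exp_pos (2*c), hV0, hc₁0.le]
          have h2 : Real.exp (-(Real.log 2/2) * t^(1/s))
              ≤ Real.exp (-c * ε^(1/s) * jap ξ^(1/s)) := Real.exp_le_exp.mpr hexp
          have h3 : (0:ℝ) ≤ ε ^ (-(N:ℝ)) := Real.rpow_nonneg hε0.le _
          calc (2*(V*c₁)) * ε ^ (-(N:ℝ)) * Real.exp (-(Real.log 2/2) * t^(1/s))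
              ≤ (2*(V*c₁)) * ε ^ (-(N:ℝ)) * Real.exp (-c * ε^(1/s) * jap ξ^(1/s)) := by
                have hq : (0:ℝ) ≤ 2*(V*c₁) := by positivity
                exact mul_le_mul_of_nonneg_left h2 (mul_nonneg hq h3)
            _ ≤ c' * ε ^ (-(N:ℝ)) * Real.exp (-c * ε^(1/s) * jap ξ^(1/s)) := by
                exact mul_le_mul_of_nonneg_right
                  (mul_le_mul_of_nonneg_right h1 h3) (Real.exp_pos _).le
end
end

section
/- Let λ_1(t,ξ),…,λ_m(t,ξ) be real-valued functions on [0,T]×(ℝⁿ∖{0}), compactly supported and bounded in t, continuous and homogeneous of order 1 in ξ, and let λ_{j,ε}(t,ξ) be smooth-in-t regularisations satisfying: for every k ∈ ℕ there exists c > 0 with |d_t^k λ_{j,ε}(t,ξ)| ≤ c ε^{−k}|ξ| for all t ∈ [0,T], ξ ≠ 0, ε ∈ (0,1], and each λ_{j,ε}(·,ξ) is homogeneous of order 1 in ξ. Define functions a_{ν,j,ε}(t), for multi-indices ν with |ν| = j, j = 1,…,m, by the identity −Σ_{|ν|=j} a_{ν,j,ε}(t) ξ^ν = σ_j^{(m)}(λ_ε)(t,ξ)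 for all ξ, where σ_h^{(m)}(λ_ε) = (−1)^h Σ_{1≤i_1<…<i_h≤m} λ_{i_1,ε}⋯λ_{i_h,ε}. Then every net (a_{ν,j,ε})_ε is C^∞-moderate: for all k ∈ ℕ there exist N ∈ ℕ and c > 0 such that |d_t^k a_{ν,j,ε}(t)| ≤ c ε^{−N} for all t ∈ [0,T] and ε ∈ (0,1]. -/
noncomputable section

open MeasureTheory Real Filter Finset

lemma monomial_indep {n : ℕ} (A : Finset (Fin n → ℕ)) (c : {ν // ν ∈ A} → ℝ)
    (h : ∀ ξ : Vn n, ∑ ν : {ν // ν ∈ A}, c ν * ∏ i, ξ i ^ ν.1 i = 0) :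
    c = 0 := by
  set p : MvPolynomial (Fin n) ℝ :=
    ∑ ν : {ν // ν ∈ A}, MvPolynomial.monomial (Finsupp.equivFunOnFinite.symm ν.1) (c ν) with hp
  have heval : ∀ x : Fin n → ℝ, MvPolynomial.eval x p = 0 := by
    intro x
    have hx := h (WithLp.toLp 2 x)
    rw [hp, map_sum, ← hx]
    refine Finset.sum_congr rfl fun ν _ => ?_
    rw [MvPolynomial.eval_monomial, Finsupp.prod_fintype _ _ (fun i => pow_zero (x i))]
    simp [Finsupp.equivFunOnFinite]
    exact Or.inl rfl
  have hp0 : p = 0 := by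
    apply MvPolynomial.funext
    intro x
    simp [heval x]
  funext ν
  have h2 := congrArg (MvPolynomial.coeff (Finsupp.equivFunOnFinite.symm ν.1)) hp0
  rw [hp, MvPolynomial.coeff_sum] at h2
  simp only [MvPolynomial.coeff_monomial, MvPolynomial.coeff_zero] at h2
  rw [Finset.sum_eq_single ν] at h2
  · simpa using h2
  · intro b _ hb
    rw [if_neg]
    intro hEq
    exact hb (Subtype.ext (Finsupp.equivFunOnFinite.symm.injective hEq))
  · intro hν; exact absurd (Finset.mem_univ ν) hν

lemma contDiff_finset_prod {ι : Type*} {f : ι → ℝ → ℝ} {S : Finset ι}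
    (hf : ∀ i ∈ S, ContDiff ℝ (⊤ : ℕ∞) (f i)) :
    ContDiff ℝ (⊤ : ℕ∞) (fun τ => ∏ i ∈ S, f i τ) := by
  classical
  induction S using Finset.induction with
  | empty => simpa using contDiff_const
  | @insert b T hbT ih =>
    simp only [Finset.prod_insert hbT]
    exact (hf b (mem_insert_self _ _)).mul (ih fun i hi => hf i (mem_insert_of_mem hi))

lemma prod_bound {ι : Type*} (k : ℕ) (B : ℝ) (hB : 1 ≤ B) (f : ι → ℝ → ℝ) (S : Finset ι)
    (hf : ∀ i ∈ S, ContDiff ℝ (⊤ : ℕ∞) (f i)) (t : ℝ)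
    (hfb : ∀ i ∈ S, ∀ l ≤ k, ‖iteratedFDeriv ℝ l (f i) t‖ ≤ B) :
    ∀ l ≤ k, ‖iteratedFDeriv ℝ l (fun τ => ∏ i ∈ S, f i τ) t‖ ≤ (2 ^ k * B) ^ S.card := by
  classical
  have h2k : (1:ℝ) ≤ 2 ^ k := by simpa using pow_le_pow_right₀ one_le_two (Nat.zero_le k)
  have hB0 : (0:ℝ) ≤ B := le_trans zero_le_one hB
  induction S using Finset.induction with
  | empty =>
    intro l hl
    simp only [Finset.prod_empty, Finset.card_empty, pow_zero]
    rcases Nat.eq_zero_or_pos l with rfl | hl0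
    · rw [norm_iteratedFDeriv_zero]; simp
    · rw [iteratedFDeriv_const_of_ne (Nat.pos_iff_ne_zero.mp hl0)]
      simp
  | @insert b T hbT ih =>
    intro l hl
    have hfT : ∀ i ∈ T, ContDiff ℝ (⊤ : ℕ∞) (f i) := fun i hi => hf i (mem_insert_of_mem hi)
    have hfbT : ∀ i ∈ T, ∀ l ≤ k, ‖iteratedFDeriv ℝ l (f i) t‖ ≤ B :=
      fun i hi => hfb i (mem_insert_of_mem hi)
    have ihT := ih hfT hfbT
    have hcd : ContDiff ℝ (⊤ : ℕ∞) (fun τ => ∏ i ∈ T, f i τ) := contDiff_finset_prod hfT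
    have hprod : (fun τ => ∏ i ∈ insert b T, f i τ) =
        (fun τ => f b τ * ∏ i ∈ T, f i τ) := by
      funext τ; exact Finset.prod_insert hbT
    rw [hprod]
    have step1 := norm_iteratedFDeriv_mul_le (𝕜 := ℝ) (hf b (mem_insert_self _ _)) hcd t
      (n := l) (by exact_mod_cast le_top)
    refine step1.trans ?_
    have hsum : ∑ i ∈ Finset.range (l + 1), (l.choose i : ℝ) * ‖iteratedFDeriv ℝ i (f b) t‖ *
          ‖iteratedFDeriv ℝ (l - i) (fun τ => ∏ i ∈ T, f i τ) t‖ ≤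
        ∑ i ∈ Finset.range (l + 1), (l.choose i : ℝ) * (B * (2 ^ k * B) ^ T.card) := by
      refine Finset.sum_le_sum fun i hi => ?_
      have hik : i ≤ k := le_trans (Nat.lt_succ_iff.mp (mem_range.mp hi)) hl
      have h1 : ‖iteratedFDeriv ℝ i (f b) t‖ ≤ B := hfb b (mem_insert_self _ _) i hik
      have h2 := ihT (l - i) (le_trans (Nat.sub_le _ _) hl)
      rw [mul_assoc]
      exact mul_le_mul_of_nonneg_left
        (mul_le_mul h1 h2 (norm_nonneg _) hB0) (Nat.cast_nonneg _)
    refine hsum.trans ?_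
    rw [← Finset.sum_mul]
    have h2l : (∑ i ∈ Finset.range (l + 1), (l.choose i : ℝ)) = 2 ^ l := by
      exact_mod_cast Nat.sum_range_choose l
    rw [h2l, Finset.card_insert_of_notMem hbT, pow_succ]
    have hll : (2:ℝ) ^ l ≤ 2 ^ k := pow_le_pow_right₀ one_le_two hl
    calc (2:ℝ) ^ l * (B * (2 ^ k * B) ^ T.card)
        ≤ 2 ^ k * (B * (2 ^ k * B) ^ T.card) := by
          apply mul_le_mul_of_nonneg_right hll (by positivity)
      _ = (2 ^ k * B) ^ T.card * (2 ^ k * B) := by ring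

set_option maxHeartbeats 1000000 in
/-- **Proposition 2.2, moderateness part.** Let `λ_1,…,λ_m` be real roots,
compactly supported and bounded in `t`, continuous and positively homogeneous of order `1` in
`ξ`, and let `λ_{j,ε}` be smooth-in-`t` regularisations, homogeneous of order `1` in `ξ`,
satisfying `|d_t^k λ_{j,ε}(t,ξ)| ≤ c ε^{−k}|ξ|`. If the coefficients `a_{ν,j,ε}(t)` are defined
by `−Σ_{|ν|=j} a_{ν,j,ε}(t) ξ^ν = σ_j^{(m)}(λ_ε)(t,ξ)` for all `ξ`, then every net
`(a_{ν,j,ε})_ε` is `C^∞`-moderate: smooth in `t`, and for every `k` there are `N ∈ ℕ`, `c > 0`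
with `|d_t^k a_{ν,j,ε}(t)| ≤ c ε^{−N}` on `[0,T]`, uniformly in `ε ∈ (0,1]`. -/
theorem regularised_coefficients_Cinf_moderate
    (n m : ℕ) (hn : 1 ≤ n) (hm : 1 ≤ m) (T : ℝ) (hT : 0 < T)
    (lam0 : Fin m → ℝ → Vn n → ℝ)
    (hlam0_supp : ∀ (j : Fin m) (ξ : Vn n), HasCompactSupport (fun t => lam0 j t ξ))
    (hlam0_bdd : ∀ (j : Fin m) (ξ : Vn n), ∃ c : ℝ, ∀ t ∈ Set.Icc (0:ℝ) T, |lam0 j t ξ| ≤ c)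
    (hlam0_cont : ∀ (j : Fin m) (t : ℝ), Continuous (lam0 j t))
    (hlam0_hom : ∀ (j : Fin m) (t : ℝ) (r : ℝ), 0 < r → ∀ ξ : Vn n,
      lam0 j t (r • ξ) = r * lam0 j t ξ)
    (lam : Fin m → ℝ → ℝ → Vn n → ℝ)  -- `lam j ε t ξ = λ_{j,ε}(t,ξ)`
    (hlam_smooth : ∀ (j : Fin m), ∀ ε ∈ Set.Ioc (0:ℝ) 1, ∀ ξ : Vn n,
      ContDiff ℝ (⊤ : ℕ∞) (fun t => lam j ε t ξ))
    (hlam_mod : ∀ k : ℕ, ∃ c > (0:ℝ), ∀ (j : Fin m), ∀ ε ∈ Set.Ioc (0:ℝ) 1,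
      ∀ t ∈ Set.Icc (0:ℝ) T, ∀ ξ : Vn n, ξ ≠ 0 →
        |iteratedDeriv k (fun τ => lam j ε τ ξ) t| ≤ c * ε ^ (-(k:ℝ)) * ‖ξ‖)
    (hlam_hom : ∀ (j : Fin m), ∀ ε ∈ Set.Ioc (0:ℝ) 1, ∀ (t : ℝ) (r : ℝ), 0 < r → ∀ ξ : Vn n,
      lam j ε t (r • ξ) = r * lam j ε t ξ)
    (a : (Fin n → ℕ) → ℕ → ℝ → ℝ → ℝ)  -- `a ν j ε t = a_{ν,j,ε}(t)`
    (ha : ∀ j ∈ Finset.Icc 1 m, ∀ ε ∈ Set.Ioc (0:ℝ) 1, ∀ (t : ℝ) (ξ : Vn n),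
      -(∑ ν ∈ Finset.Nat.antidiagonalTuple n j, a ν j ε t * ∏ i, ξ i ^ ν i) =
        (-1) ^ j * ∑ S ∈ Finset.powersetCard j (Finset.univ : Finset (Fin m)),
          ∏ i ∈ S, lam i ε t ξ) :
    ∀ j ∈ Finset.Icc 1 m, ∀ ν ∈ Finset.Nat.antidiagonalTuple n j,
      (∀ ε ∈ Set.Ioc (0:ℝ) 1, ContDiff ℝ (⊤ : ℕ∞) (a ν j ε)) ∧
      ∀ k : ℕ, ∃ N : ℕ, ∃ c > (0:ℝ), ∀ ε ∈ Set.Ioc (0:ℝ) 1, ∀ t ∈ Set.Icc (0:ℝ) T,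
        |iteratedDeriv k (a ν j ε) t| ≤ c * ε ^ (-(N:ℝ)) := by
  classical
  intro j hj ν hν
  obtain ⟨hj1, hjm⟩ := Finset.mem_Icc.mp hj
  set A := Finset.Nat.antidiagonalTuple n j with hA
  set Λ : Vn n → Module.Dual ℝ ({ν // ν ∈ A} → ℝ) := fun ξ =>
    ∑ μ : {ν // ν ∈ A}, (∏ i, ξ i ^ μ.1 i) • LinearMap.proj μ with hΛdef
  have hΛ : ∀ ξ (c : {ν // ν ∈ A} → ℝ),
      Λ ξ c = ∑ μ : {ν // ν ∈ A}, (∏ i, ξ i ^ μ.1 i) * c μ := by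
    intro ξ c
    simp [hΛdef, LinearMap.sum_apply, LinearMap.smul_apply, LinearMap.proj_apply, smul_eq_mul]
  have hspan : Submodule.span ℝ (Set.range Λ) = ⊤ := by
    have hco : (Submodule.span ℝ (Set.range Λ)).dualCoannihilator = ⊥ := by
      rw [Submodule.eq_bot_iff]
      intro c hc
      rw [Submodule.mem_dualCoannihilator] at hc
      have h0 : ∀ ξ : Vn n, ∑ μ : {ν // ν ∈ A}, c μ * ∏ i, ξ i ^ μ.1 i = 0 := by
        intro ξ
        have h1 := hc (Λ ξ) (Submodule.subset_span (Set.mem_range_self ξ))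
        rw [hΛ] at h1
        rw [← h1]
        exact Finset.sum_congr rfl fun μ _ => mul_comm _ _
      exact monomial_indep A c h0
    have h2 := Subspace.dualCoannihilator_dualAnnihilator_eq
      (W := Submodule.span ℝ (Set.range Λ))
    rw [hco, Submodule.dualAnnihilator_bot] at h2
    exact h2.symm
  have hmem : (LinearMap.proj (⟨ν, hν⟩ : {ν // ν ∈ A}) :
      ({ν // ν ∈ A} → ℝ) →ₗ[ℝ] ℝ) ∈ Submodule.span ℝ (Set.range Λ) := by
    rw [hspan]; exact Submodule.mem_top
  obtain ⟨M, w, g, hg⟩ := Submodule.mem_span_set'.mp hmem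
  have hex : ∀ i : Fin M, ∃ ξ : Vn n, Λ ξ = (g i : Module.Dual ℝ ({ν // ν ∈ A} → ℝ)) :=
    fun i => (g i).2
  choose pts hpts using hex
  -- key formula
  set G : ℝ → ℝ → Vn n → ℝ := fun ε t ξ =>
    -((-1:ℝ) ^ j * ∑ S ∈ Finset.powersetCard j (Finset.univ : Finset (Fin m)),
      ∏ i ∈ S, lam i ε t ξ) with hGdef
  have hkey : ∀ ε ∈ Set.Ioc (0:ℝ) 1, ∀ t : ℝ,
      a ν j ε t = ∑ i : Fin M, w i * G ε t (pts i) := by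
    intro ε hε t
    set c : {ν // ν ∈ A} → ℝ := fun μ => a μ.1 j ε t with hc
    have hΛG : ∀ ξ, Λ ξ c = G ε t ξ := by
      intro ξ
      rw [hΛ]
      have hha := ha j hj ε hε t ξ
      have hsc : ∑ μ : {ν // ν ∈ A}, (∏ i, ξ i ^ μ.1 i) * c μ
          = ∑ μ ∈ A, a μ j ε t * ∏ i, ξ i ^ μ i := by
        rw [← Finset.sum_coe_sort A (fun μ => a μ j ε t * ∏ i, ξ i ^ μ i)]
        exact Finset.sum_congr rfl fun μ _ => mul_comm _ _
      rw [hsc]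
      simp only [hGdef]
      rw [← hA] at hha
      linarith [hha]
    have e1 : a ν j ε t = (LinearMap.proj (⟨ν, hν⟩ : {ν // ν ∈ A}) :
        ({ν // ν ∈ A} → ℝ) →ₗ[ℝ] ℝ) c := rfl
    rw [e1, ← hg, LinearMap.sum_apply]
    refine Finset.sum_congr rfl fun i _ => ?_
    rw [LinearMap.smul_apply, ← hpts i, hΛG]
    simp [smul_eq_mul]
  have hGsmooth : ∀ ε ∈ Set.Ioc (0:ℝ) 1, ∀ ξ : Vn n, ContDiff ℝ (⊤:ℕ∞) (fun t => G ε t ξ) := by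
    intro ε hε ξ
    apply ContDiff.neg
    apply ContDiff.mul contDiff_const
    apply ContDiff.sum
    intro S _
    exact contDiff_finset_prod (fun i _ => hlam_smooth i ε hε ξ)
  constructor
  · intro ε hε
    have hfun : a ν j ε = fun t => ∑ i : Fin M, w i * G ε t (pts i) := funext (hkey ε hε)
    rw [hfun]
    apply ContDiff.sum
    intro i _
    exact contDiff_const.mul (hGsmooth ε hε (pts i))
  -- moderateness
  intro k
  choose cf hcf using hlam_mod
  set c0 : ℝ := ∑ l ∈ Finset.range (k+1), cf l with hc0def
  have hc0pos : 0 < c0 := Finset.sum_pos (fun l _ => (hcf l).1) Finset.nonempty_range_add_one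
  have hc0ge : ∀ l ≤ k, cf l ≤ c0 := fun l hl =>
    Finset.single_le_sum (fun i _ => (hcf i).1.le) (Finset.mem_range.mpr (Nat.lt_succ_of_le hl))
  set c1 : ℝ := max c0 1 with hc1def
  have hc11 : 1 ≤ c1 := le_max_right _ _
  have hc10 : 0 ≤ c1 := le_trans zero_le_one hc11
  set R : ℝ := 1 + ∑ i : Fin M, ‖pts i‖ with hRdef
  have hsumn : 0 ≤ ∑ i : Fin M, ‖pts i‖ := Finset.sum_nonneg fun i _ => norm_nonneg _
  have hR1 : 1 ≤ R := le_add_of_nonneg_right hsumn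
  have hR0 : 0 ≤ R := le_trans zero_le_one hR1
  have hRge : ∀ i : Fin M, ‖pts i‖ ≤ R := by
    intro i
    have := Finset.single_le_sum (f := fun i : Fin M => ‖pts i‖)
      (fun i _ => norm_nonneg _) (Finset.mem_univ i)
    simp only [hRdef]; linarith
  have hlamzero : ∀ (i : Fin m), ∀ ε ∈ Set.Ioc (0:ℝ) 1, ∀ t : ℝ, lam i ε t (0 : Vn n) = 0 := by
    intro i ε hε t
    have h2 := hlam_hom i ε hε t 2 two_pos 0
    rw [smul_zero] at h2
    linarith
  have hdb : ∀ l ≤ k, ∀ (i : Fin m), ∀ ε ∈ Set.Ioc (0:ℝ) 1, ∀ t ∈ Set.Icc (0:ℝ) T,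
      ∀ ξ : Vn n, ‖iteratedFDeriv ℝ l (fun τ => lam i ε τ ξ) t‖ ≤ cf l * ε ^ (-(l:ℝ)) * ‖ξ‖ := by
    intro l hl i ε hε t ht ξ
    rcases eq_or_ne ξ 0 with rfl | hξ
    · have hfun : (fun τ => lam i ε τ (0:Vn n)) = fun _ => (0:ℝ) :=
        funext (hlamzero i ε hε)
      rw [hfun, iteratedFDeriv_zero_fun]
      simp
    · have h2 := (hcf l).2 i ε hε t ht ξ hξ
      rw [norm_iteratedFDeriv_eq_norm_iteratedDeriv, Real.norm_eq_abs]
      exact h2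
  refine ⟨k * m, ?_⟩
  set CW : ℝ := ∑ i : Fin M, |w i| with hCWdef
  have hCW0 : 0 ≤ CW := Finset.sum_nonneg fun i _ => abs_nonneg _
  set P : ℕ := (Finset.powersetCard j (Finset.univ : Finset (Fin m))).card with hPdef
  have hBASE : (0:ℝ) ≤ CW * P * (2 ^ k * (c1 * R)) ^ j :=
    mul_nonneg (mul_nonneg hCW0 (Nat.cast_nonneg _))
      (pow_nonneg (mul_nonneg (pow_nonneg zero_le_two k) (mul_nonneg hc10 hR0)) j)
  refine ⟨CW * P * (2 ^ k * (c1 * R)) ^ j + 1, by linarith, ?_⟩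
  intro ε hε t ht
  have hε0 : 0 < ε := hε.1
  have hε1 : ε ≤ 1 := hε.2
  set B : ℝ := c1 * R * ε ^ (-(k:ℝ)) with hBdef
  have hεk1 : 1 ≤ ε ^ (-(k:ℝ)) := by
    have := Real.rpow_le_rpow_of_exponent_ge hε0 hε1
      (show -(k:ℝ) ≤ 0 from neg_nonpos.mpr (Nat.cast_nonneg k))
    simpa using this
  have hεk0 : 0 ≤ ε ^ (-(k:ℝ)) := le_trans zero_le_one hεk1
  have hB1 : 1 ≤ B := by
    have h1 : 1 ≤ c1 * R := one_le_mul_of_one_le_of_one_le hc11 hR1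
    calc (1:ℝ) = 1 * 1 := by ring
      _ ≤ (c1 * R) * ε ^ (-(k:ℝ)) := mul_le_mul h1 hεk1 zero_le_one (mul_nonneg hc10 hR0)
  have hprodbd : ∀ (i0 : Fin M) (S : Finset (Fin m)), S.card = j →
      ‖iteratedFDeriv ℝ k (fun τ => ∏ i ∈ S, lam i ε τ (pts i0)) t‖ ≤ (2 ^ k * B) ^ j := by
    intro i0 S hS
    have hbd : ∀ i ∈ S, ∀ l ≤ k,
        ‖iteratedFDeriv ℝ l (fun τ => lam i ε τ (pts i0)) t‖ ≤ B := by
      intro i _ l hl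
      refine le_trans (hdb l hl i ε hε t ht (pts i0)) ?_
      have e1 : cf l ≤ c1 := le_trans (hc0ge l hl) (le_max_left _ _)
      have e2 : ε ^ (-(l:ℝ)) ≤ ε ^ (-(k:ℝ)) :=
        Real.rpow_le_rpow_of_exponent_ge hε0 hε1
          (by exact_mod_cast neg_le_neg (Nat.cast_le.mpr hl))
      have e3 : ‖pts i0‖ ≤ R := hRge i0
      have hcfl : 0 < cf l := (hcf l).1
      calc cf l * ε ^ (-(l:ℝ)) * ‖pts i0‖
          ≤ c1 * ε ^ (-(k:ℝ)) * R := by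
            apply mul_le_mul _ e3 (norm_nonneg _) (mul_nonneg hc10 hεk0)
            apply mul_le_mul e1 e2 (Real.rpow_nonneg hε0.le _) hc10
        _ = B := by rw [hBdef]; ring
    have := prod_bound k B hB1 (fun i τ => lam i ε τ (pts i0)) S
      (fun i _ => hlam_smooth i ε hε (pts i0)) t hbd k le_rfl
    rwa [hS] at this
  -- flatten
  set W : Fin M → ℝ := fun i0 => -(w i0 * (-1:ℝ) ^ j) with hWdef
  set Q : Fin M → Finset (Fin m) → ℝ → ℝ :=
    fun i0 S τ => W i0 * ∏ i ∈ S, lam i ε τ (pts i0) with hQdef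
  set F : Fin M → ℝ → ℝ :=
    fun i0 τ => ∑ S ∈ Finset.powersetCard j (Finset.univ : Finset (Fin m)), Q i0 S τ with hFdef
  have hQsmooth : ∀ (i0 : Fin M) (S : Finset (Fin m)), ContDiff ℝ (⊤ : ℕ∞) (Q i0 S) := by
    intro i0 S
    exact contDiff_const.mul (contDiff_finset_prod (fun i _ => hlam_smooth i ε hε (pts i0)))
  have hFsmooth : ∀ i0 : Fin M, ContDiff ℝ (⊤ : ℕ∞) (F i0) := by
    intro i0
    apply ContDiff.sum
    intro S _
    exact hQsmooth i0 S
  have hfull : a ν j ε = fun τ => ∑ i0 : Fin M, F i0 τ := by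
    funext τ
    rw [hkey ε hε τ]
    refine Finset.sum_congr rfl fun i0 _ => ?_
    simp only [hFdef, hQdef, hGdef, hWdef]
    rw [mul_neg, ← mul_assoc, ← neg_mul, Finset.mul_sum]
  rw [hfull, ← Real.norm_eq_abs, ← norm_iteratedFDeriv_eq_norm_iteratedDeriv]
  have hsplit1 : iteratedFDeriv ℝ k (fun τ => ∑ i0 : Fin M, F i0 τ) t =
      ∑ i0 : Fin M, iteratedFDeriv ℝ k (F i0) t := by
    have := iteratedFDeriv_sum (𝕜 := ℝ) (f := F) (u := Finset.univ) (i := k)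
      (fun i0 _ => (hFsmooth i0).of_le (by exact_mod_cast le_top))
    exact (congrFun this t).trans (by simp)
  have hsplit2 : ∀ i0 : Fin M, iteratedFDeriv ℝ k (F i0) t =
      ∑ S ∈ Finset.powersetCard j (Finset.univ : Finset (Fin m)),
        iteratedFDeriv ℝ k (Q i0 S) t := by
    intro i0
    have := iteratedFDeriv_sum (𝕜 := ℝ) (f := Q i0)
      (u := Finset.powersetCard j (Finset.univ : Finset (Fin m))) (i := k)
      (fun S _ => (hQsmooth i0 S).of_le (by exact_mod_cast le_top))
    exact (congrFun this t).trans (by simp)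
  have hQbd : ∀ (i0 : Fin M), ∀ S ∈ Finset.powersetCard j (Finset.univ : Finset (Fin m)),
      ‖iteratedFDeriv ℝ k (Q i0 S) t‖ ≤ |w i0| * (2 ^ k * B) ^ j := by
    intro i0 S hS
    have hcard : S.card = j := (Finset.mem_powersetCard.mp hS).2
    have hQsm : Q i0 S = W i0 • (fun τ => ∏ i ∈ S, lam i ε τ (pts i0)) := by
      funext τ; simp [hQdef, smul_eq_mul]
    rw [hQsm, iteratedFDeriv_const_smul_apply
      (((contDiff_finset_prod (fun i _ => hlam_smooth i ε hε (pts i0))).of_le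
        (by exact_mod_cast le_top)).contDiffAt)]
    have hns : ‖W i0 • iteratedFDeriv ℝ k (fun τ => ∏ i ∈ S, lam i ε τ (pts i0)) t‖
        ≤ ‖W i0‖ * ‖iteratedFDeriv ℝ k (fun τ => ∏ i ∈ S, lam i ε τ (pts i0)) t‖ :=
      ContinuousMultilinearMap.opNorm_smul_le _ _
    have hWabs : ‖W i0‖ = |w i0| := by
      simp [hWdef, Real.norm_eq_abs, abs_mul, abs_pow]
    refine hns.trans ?_
    rw [hWabs]
    exact mul_le_mul_of_nonneg_left (hprodbd i0 S hcard) (abs_nonneg _)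
  have hbound : ‖iteratedFDeriv ℝ k (fun τ => ∑ i0 : Fin M, F i0 τ) t‖ ≤
      CW * P * (2 ^ k * B) ^ j := by
    rw [hsplit1]
    refine le_trans (norm_sum_le _ _) ?_
    have step : ∀ i0 : Fin M, ‖iteratedFDeriv ℝ k (F i0) t‖ ≤ |w i0| * (P * (2 ^ k * B) ^ j) := by
      intro i0
      rw [hsplit2 i0]
      refine le_trans (norm_sum_le _ _) ?_
      refine le_trans (Finset.sum_le_sum (hQbd i0)) ?_
      rw [Finset.sum_const, nsmul_eq_mul, ← hPdef]
      ring_nf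
      exact le_refl _
    refine le_trans (Finset.sum_le_sum fun i0 _ => step i0) ?_
    rw [← Finset.sum_mul, ← hCWdef]
    ring_nf
    exact le_refl _
  refine le_trans hbound ?_
  have hexp : (2 ^ k * B) ^ j = (2 ^ k * (c1 * R)) ^ j * ε ^ (-(k:ℝ) * j) := by
    rw [hBdef]
    rw [show (2:ℝ) ^ k * (c1 * R * ε ^ (-(k:ℝ))) = (2 ^ k * (c1 * R)) * ε ^ (-(k:ℝ)) by ring,
      mul_pow, ← Real.rpow_natCast (ε ^ (-(k:ℝ))) j, ← Real.rpow_mul hε0.le]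
  rw [hexp]
  have hεle : ε ^ (-(k:ℝ) * j) ≤ ε ^ (-(((k*m : ℕ)):ℝ)) := by
    apply Real.rpow_le_rpow_of_exponent_ge hε0 hε1
    push_cast
    have : (j:ℝ) ≤ m := Nat.cast_le.mpr hjm
    nlinarith [Nat.cast_nonneg (α := ℝ) k]
  have hbase : (0:ℝ) ≤ CW * P * (2 ^ k * (c1 * R)) ^ j := hBASE
  calc CW * P * ((2 ^ k * (c1 * R)) ^ j * ε ^ (-(k:ℝ) * j))
      = (CW * P * (2 ^ k * (c1 * R)) ^ j) * ε ^ (-(k:ℝ) * j) := by ring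
    _ ≤ (CW * P * (2 ^ k * (c1 * R)) ^ j) * ε ^ (-(((k*m : ℕ)):ℝ)) :=
        mul_le_mul_of_nonneg_left hεle hbase
    _ ≤ (CW * P * (2 ^ k * (c1 * R)) ^ j + 1) * ε ^ (-(((k*m : ℕ)):ℝ)) := by
        apply mul_le_mul_of_nonneg_right _ (Real.rpow_nonneg hε0.le _)
        linarith
end
end

section
/- Let m ≥ 2, T > 0, ω : (0,1] → (0,∞), and for each t ∈ [0,T], ξ ∈ ℝⁿ, ε ∈ (0,1] let λ_{1,ε}(t,ξ) ≤ … ≤ λ_{m,ε}(t,ξ) be real numbers satisfying λ_{j+1,ε}(t,ξ) − λ_{j,ε}(t,ξ) ≥ ω(ε)⟨ξ⟩ for j = 1,…,m−1 and ω(ε) ≤ 1. Let S(t,ξ) be an m×m real symmetric positive semi-definite matrix with entries bounded uniformly in t ∈ [0,T], ξ ∈ ℝⁿ and ε ∈ (0,1], and with det S(t,ξ) = Π_{1≤j<i≤m} (λ_{i,ε}(t,ξ) − λ_{j,ε}(t,ξ))² ⟨ξ⟩^{−2}. Then there exist positive constants c₁ and c₂, independent of t, ξ and ε, such that c₁ ω(ε)^{m²−m}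 |V|² ≤ (S(t,ξ)V, V) ≤ c₂ |V|² for all t ∈ [0,T], ξ ∈ ℝⁿ, ε ∈ (0,1] and V ∈ ℂ^m. -/
noncomputable section

open MeasureTheory Real Filter Finset

open Matrix

private lemma card_lt_pairs (m : ℕ) :
    2 * ((Finset.univ : Finset (Fin m × Fin m)).filter (fun p => p.1 < p.2)).card
      = m ^ 2 - m := by
  classical
  have hswap : ((Finset.univ : Finset (Fin m × Fin m)).filter (fun p => p.1 < p.2)).card
      = ((Finset.univ : Finset (Fin m × Fin m)).filter (fun p => p.2 < p.1)).card := by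
    refine Finset.card_bij' (fun p _ => p.swap) (fun p _ => p.swap) ?_ ?_ ?_ ?_ <;>
      simp [Finset.mem_filter]
  have hdisj : Disjoint
      ((Finset.univ : Finset (Fin m × Fin m)).filter (fun p => p.1 < p.2))
      ((Finset.univ : Finset (Fin m × Fin m)).filter (fun p => p.2 < p.1)) := by
    rw [Finset.disjoint_left]
    intro p hp hq
    simp only [Finset.mem_filter] at hp hq
    exact absurd hq.2 (lt_asymm hp.2)
  have hunion :
      ((Finset.univ : Finset (Fin m × Fin m)).filter (fun p => p.1 < p.2))
        ∪ ((Finset.univ : Finset (Fin m × Fin m)).filter (fun p => p.2 < p.1))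
      = (Finset.univ : Finset (Fin m)).offDiag := by
    ext p
    simp only [Finset.mem_union, Finset.mem_filter, Finset.mem_univ, true_and,
      Finset.mem_offDiag, ne_eq]
    exact ne_iff_lt_or_gt.symm
  have hcard := Finset.card_union_of_disjoint hdisj
  rw [hunion, Finset.offDiag_card, ← hswap, Finset.card_univ, Fintype.card_fin] at hcard
  rw [pow_two]
  omega

private lemma re_quad {m : ℕ} (S : Matrix (Fin m) (Fin m) ℝ) (V : Fin m → ℂ) :
    (dotProduct (star V) ((S.map Complex.ofReal) *ᵥ V)).re
      = dotProduct (fun i => (V i).re) (S *ᵥ (fun i => (V i).re))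
        + dotProduct (fun i => (V i).im) (S *ᵥ (fun i => (V i).im)) := by
  simp only [dotProduct, Matrix.mulVec, Matrix.map_apply, Pi.star_apply]
  rw [Complex.re_sum, ← Finset.sum_add_distrib]
  refine Finset.sum_congr rfl fun j _ => ?_
  rw [Finset.mul_sum, Complex.re_sum, Finset.mul_sum, Finset.mul_sum,
    ← Finset.sum_add_distrib]
  refine Finset.sum_congr rfl fun k _ => ?_
  simp only [RCLike.star_def, Complex.mul_re, Complex.conj_re, Complex.conj_im,
    Complex.ofReal_re, Complex.ofReal_im, Complex.re_ofReal_mul, Complex.im_ofReal_mul]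
  ring

private lemma resq {m : ℕ} (x : Fin m → ℂ) :
    (dotProduct (star x) x).re = ∑ i, ‖x i‖ ^ 2 := by
  rw [dotProduct, Complex.re_sum]
  refine Finset.sum_congr rfl fun i _ => ?_
  simp only [Pi.star_apply, RCLike.star_def, Complex.mul_re, Complex.conj_re, Complex.conj_im,
    Complex.sq_norm, Complex.normSq_apply]
  ring

private lemma quad_bounds {m : ℕ} (hm : 0 < m) (S : Matrix (Fin m) (Fin m) ℝ)
    (hS : S.PosSemidef) (M : ℝ) (hM : 0 < M) (hbd : ∀ i j, |S i j| ≤ M)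
    (d : ℝ) (hd : 0 < d) (hdet : d ≤ S.det) (V : Fin m → ℂ) :
    (d / (M * m) ^ (m - 1)) * ∑ i, ‖V i‖ ^ 2 ≤
        (dotProduct (star V) ((S.map Complex.ofReal) *ᵥ V)).re ∧
      (dotProduct (star V) ((S.map Complex.ofReal) *ᵥ V)).re
        ≤ M * m * ∑ i, ‖V i‖ ^ 2 := by
  classical
  set A : Matrix (Fin m) (Fin m) ℂ := S.map Complex.ofReal with hAdef
  have hA : A.IsHermitian := hS.1.map Complex.ofReal (fun r => by simp [Complex.conj_ofReal])
  -- upper bound for arbitrary vectors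
  have upper : ∀ W : Fin m → ℂ,
      (dotProduct (star W) (A *ᵥ W)).re ≤ M * m * ∑ i, ‖W i‖ ^ 2 := by
    intro W
    have h1 : (dotProduct (star W) (A *ᵥ W)).re
        ≤ ‖dotProduct (star W) (A *ᵥ W)‖ := by
      exact Complex.re_le_norm _
    refine h1.trans ?_
    have h2 : ‖dotProduct (star W) (A *ᵥ W)‖ ≤ M * (∑ i, ‖W i‖) ^ 2 := by
      rw [dotProduct]
      refine (norm_sum_le _ _).trans ?_
      have hterm : ∀ j, ‖star (W j) * (A *ᵥ W) j‖ ≤ ‖W j‖ * (M * ∑ k, ‖W k‖) := by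
        intro j
        rw [norm_mul, norm_star]
        refine mul_le_mul_of_nonneg_left ?_ (norm_nonneg _)
        rw [Matrix.mulVec]
        refine (norm_sum_le _ _).trans ?_
        rw [Finset.mul_sum]
        refine Finset.sum_le_sum fun k _ => ?_
        rw [norm_mul]
        have : ‖(A j k : ℂ)‖ ≤ M := by
          simp only [hAdef, Matrix.map_apply, Complex.norm_real, Real.norm_eq_abs]
          exact hbd j k
        exact mul_le_mul_of_nonneg_right this (norm_nonneg _)
      refine (Finset.sum_le_sum fun j _ => hterm j).trans ?_
      rw [← Finset.sum_mul]
      have : (∑ j, ‖W j‖) * (M * ∑ k, ‖W k‖) = M * (∑ i, ‖W i‖) ^ 2 := by ring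
      rw [this]
    refine h2.trans ?_
    have h3 : (∑ i, ‖W i‖) ^ 2 ≤ (m : ℝ) * ∑ i, ‖W i‖ ^ 2 := by
      have := sq_sum_le_card_mul_sum_sq (s := (Finset.univ : Finset (Fin m)))
        (f := fun i => ‖W i‖)
      simpa [Finset.card_univ] using this
    calc M * (∑ i, ‖W i‖) ^ 2 ≤ M * ((m : ℝ) * ∑ i, ‖W i‖ ^ 2) :=
          mul_le_mul_of_nonneg_left h3 hM.le
      _ = M * m * ∑ i, ‖W i‖ ^ 2 := by ring
  -- nonnegativity of real part of quadratic form
  have hpos : ∀ W : Fin m → ℂ, 0 ≤ (dotProduct (star W) (A *ᵥ W)).re := by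
    intro W
    rw [hAdef, re_quad]
    have h1 := hS.dotProduct_mulVec_nonneg (fun i => (W i).re)
    have h2 := hS.dotProduct_mulVec_nonneg (fun i => (W i).im)
    simp only [star_trivial] at h1 h2
    exact add_nonneg h1 h2
  set μ : Fin m → ℝ := hA.eigenvalues with hμdef
  have hdetA : ∏ i, μ i = S.det := by
    have h1 := hA.det_eq_prod_eigenvalues
    have h2 : A.det = (S.det : ℂ) := by
      have := RingHom.map_det Complex.ofRealHom S
      exact this.symm
    rw [h2] at h1
    have h3 : ((∏ i, μ i : ℝ) : ℂ) = ((S.det : ℝ) : ℂ) := by push_cast; exact h1.symm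
    exact_mod_cast h3
  have hμeq : ∀ i, μ i = (dotProduct (star (fun j => hA.eigenvectorBasis i j))
      (A *ᵥ (fun j => hA.eigenvectorBasis i j))).re := by
    intro i
    simpa using hA.eigenvalues_eq i
  have hnorm1 : ∀ i, ∑ j, ‖hA.eigenvectorBasis i j‖ ^ 2 = 1 := by
    intro i
    have h1 : ‖hA.eigenvectorBasis i‖ = 1 := hA.eigenvectorBasis.orthonormal.1 i
    have h2 := EuclideanSpace.norm_eq (hA.eigenvectorBasis i)
    rw [h1] at h2
    have h3 : Real.sqrt (∑ j, ‖hA.eigenvectorBasis i j‖ ^ 2) = 1 := h2.symm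
    have h4 : (0:ℝ) ≤ ∑ j, ‖hA.eigenvectorBasis i j‖ ^ 2 :=
      Finset.sum_nonneg fun j _ => sq_nonneg _
    nlinarith [Real.sq_sqrt h4]
  have hμ0 : ∀ i, 0 ≤ μ i := by
    intro i; rw [hμeq i]; exact hpos _
  have hμub : ∀ i, μ i ≤ M * m := by
    intro i
    rw [hμeq i]
    calc (dotProduct (star (fun j => hA.eigenvectorBasis i j))
          (A *ᵥ (fun j => hA.eigenvectorBasis i j))).re
        ≤ M * m * ∑ j, ‖hA.eigenvectorBasis i j‖ ^ 2 := upper _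
      _ = M * m := by rw [hnorm1 i, mul_one]
  have hMm : (0:ℝ) < M * m := by positivity
  have hμlb : ∀ i, d / (M * m) ^ (m - 1) ≤ μ i := by
    intro i
    have hprod : μ i * ∏ j ∈ Finset.univ.erase i, μ j = S.det := by
      rw [← hdetA, Finset.mul_prod_erase _ _ (Finset.mem_univ i)]
    have hle : ∏ j ∈ Finset.univ.erase i, μ j ≤ (M * m) ^ (m - 1) := by
      have h1 : ∏ j ∈ Finset.univ.erase i, μ j
          ≤ ∏ _j ∈ Finset.univ.erase i, (M * m) :=
        Finset.prod_le_prod (fun j _ => hμ0 j) (fun j _ => hμub j)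
      rwa [Finset.prod_const, Finset.card_erase_of_mem (Finset.mem_univ i),
        Finset.card_univ, Fintype.card_fin] at h1
    rw [div_le_iff₀ (pow_pos hMm _)]
    calc d ≤ S.det := hdet
      _ = μ i * ∏ j ∈ Finset.univ.erase i, μ j := hprod.symm
      _ ≤ μ i * (M * m) ^ (m - 1) :=
          mul_le_mul_of_nonneg_left hle (hμ0 i)
  -- spectral decomposition of quadratic form
  set U : Matrix (Fin m) (Fin m) ℂ := (hA.eigenvectorUnitary : Matrix (Fin m) (Fin m) ℂ)
    with hUdef
  set w : Fin m → ℂ := (star U) *ᵥ V with hwdef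
  have hsw : star w = star V ᵥ* U := by
    rw [hwdef, Matrix.star_mulVec, Matrix.star_eq_conjTranspose,
      Matrix.conjTranspose_conjTranspose]
  have hq : dotProduct (star V) (A *ᵥ V)
      = dotProduct (star w) ((Matrix.diagonal ((RCLike.ofReal : ℝ → ℂ) ∘ μ)) *ᵥ w) := by
    conv_lhs => rw [hA.spectral_theorem, Unitary.conjStarAlgAut_apply]
    rw [← Matrix.mulVec_mulVec, ← Matrix.mulVec_mulVec, Matrix.dotProduct_mulVec, ← hsw,
      ← hwdef]
  have hre : (dotProduct (star w)
        ((Matrix.diagonal ((RCLike.ofReal : ℝ → ℂ) ∘ μ)) *ᵥ w)).re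
      = ∑ i, μ i * ‖w i‖ ^ 2 := by
    rw [dotProduct, Complex.re_sum]
    refine Finset.sum_congr rfl fun i _ => ?_
    rw [Matrix.mulVec_diagonal]
    simp only [Pi.star_apply, RCLike.star_def, Function.comp_apply, RCLike.ofReal_re,
      Complex.mul_re, Complex.conj_re, Complex.conj_im, Complex.ofReal_re, Complex.ofReal_im,
      Complex.sq_norm, Complex.normSq_apply, RCLike.re_to_complex,
      RCLike.im_to_complex, Complex.coe_algebraMap, RCLike.ofReal_alg, smul_eq_mul, mul_one,
      Complex.re_ofReal_mul, Complex.im_ofReal_mul]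
    ring
  have hwV : ∑ i, ‖w i‖ ^ 2 = ∑ i, ‖V i‖ ^ 2 := by
    have h1 : dotProduct (star w) w = dotProduct (star V) V := by
      have hU1 : U * Uᴴ = 1 := by
        have := Matrix.mem_unitaryGroup_iff.mp hA.eigenvectorUnitary.2
        rwa [Matrix.star_eq_conjTranspose] at this
      rw [hsw, hwdef, ← Matrix.dotProduct_mulVec, Matrix.mulVec_mulVec,
        Matrix.star_eq_conjTranspose, hU1, Matrix.one_mulVec]
    have := congrArg Complex.re h1
    rwa [resq, resq] at this
  constructor
  · have hlow : (dotProduct (star V) (A *ᵥ V)).re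
        = ∑ i, μ i * ‖w i‖ ^ 2 := by rw [hq, hre]
    rw [hlow]
    calc (d / (M * m) ^ (m - 1)) * ∑ i, ‖V i‖ ^ 2
        = ∑ i, (d / (M * m) ^ (m - 1)) * ‖w i‖ ^ 2 := by
          rw [← Finset.mul_sum, hwV]
      _ ≤ ∑ i, μ i * ‖w i‖ ^ 2 :=
          Finset.sum_le_sum fun i _ =>
            mul_le_mul_of_nonneg_right (hμlb i) (sq_nonneg _)
  · exact upper V

/-- Let `m ≥ 2`, `T > 0`, and for `t ∈ [0,T]`, `ξ ∈ ℝⁿ`, `ε ∈ (0,1]` let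
`λ_{1,ε}(t,ξ) ≤ … ≤ λ_{m,ε}(t,ξ)` be real numbers with consecutive gaps `≥ ω(ε)⟨ξ⟩`, where
`0 < ω(ε) ≤ 1`. Let `S(t,ξ)` (depending also on `ε`) be a real symmetric positive semi-definite
`m×m` matrix with uniformly bounded entries and
`det S = Π_{j<i} (λ_{i,ε} − λ_{j,ε})² ⟨ξ⟩^{−2}`. Then there are `c₁, c₂ > 0`, independent of
`t, ξ, ε`, with `c₁ ω(ε)^{m²−m} |V|² ≤ (S(t,ξ)V, V) ≤ c₂ |V|²` for all `V ∈ ℂ^m`. -/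
theorem symmetriser_energy_bounds
    (m n : ℕ) (hm : 2 ≤ m) (T : ℝ) (hT : 0 < T)
    (ω : ℝ → ℝ) (hω : ∀ ε ∈ Set.Ioc (0:ℝ) 1, ω ε ∈ Set.Ioc (0:ℝ) 1)
    (lam : Fin m → ℝ → ℝ → Vn n → ℝ)  -- `lam j ε t ξ = λ_{j,ε}(t,ξ)`
    (hord : ∀ (i j : Fin m), i ≤ j → ∀ ε ∈ Set.Ioc (0:ℝ) 1, ∀ t ∈ Set.Icc 0 T, ∀ ξ : Vn n,
      lam i ε t ξ ≤ lam j ε t ξ)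
    (hsep : ∀ (i j : Fin m), (i : ℕ) + 1 = (j : ℕ) →
      ∀ ε ∈ Set.Ioc (0:ℝ) 1, ∀ t ∈ Set.Icc 0 T, ∀ ξ : Vn n,
        ω ε * jap ξ ≤ lam j ε t ξ - lam i ε t ξ)
    (S : ℝ → ℝ → Vn n → Matrix (Fin m) (Fin m) ℝ)  -- `S ε t ξ`
    (hS_pos : ∀ ε ∈ Set.Ioc (0:ℝ) 1, ∀ t ∈ Set.Icc 0 T, ∀ ξ : Vn n, (S ε t ξ).PosSemidef)
    (M : ℝ) (hM : 0 < M)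
    (hS_bdd : ∀ ε ∈ Set.Ioc (0:ℝ) 1, ∀ t ∈ Set.Icc 0 T, ∀ ξ : Vn n, ∀ i j,
      |S ε t ξ i j| ≤ M)
    (hS_det : ∀ ε ∈ Set.Ioc (0:ℝ) 1, ∀ t ∈ Set.Icc 0 T, ∀ ξ : Vn n,
      (S ε t ξ).det = ∏ p ∈ Finset.univ.filter (fun p : Fin m × Fin m => p.1 < p.2),
        ((lam p.2 ε t ξ - lam p.1 ε t ξ) ^ 2 / jap ξ ^ 2)) :
    ∃ c₁ > (0:ℝ), ∃ c₂ > (0:ℝ),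
      ∀ ε ∈ Set.Ioc (0:ℝ) 1, ∀ t ∈ Set.Icc 0 T, ∀ ξ : Vn n, ∀ V : Fin m → ℂ,
        c₁ * ω ε ^ (m ^ 2 - m) * (∑ i, ‖V i‖ ^ 2) ≤
            (dotProduct (((S ε t ξ).map (Complex.ofReal)).mulVec V) (star V)).re ∧
        (dotProduct (((S ε t ξ).map (Complex.ofReal)).mulVec V) (star V)).re ≤
            c₂ * ∑ i, ‖V i‖ ^ 2 := by
  have hm0 : 0 < m := lt_of_lt_of_le two_pos hm
  have hmR : (0:ℝ) < (m:ℝ) := by exact_mod_cast hm0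
  refine ⟨((M * m) ^ (m - 1))⁻¹, inv_pos.mpr (pow_pos (mul_pos hM hmR) _),
    M * m, mul_pos hM hmR, ?_⟩
  intro ε hε t ht ξ V
  have hω0 : 0 < ω ε := (hω ε hε).1
  have hjap : (1:ℝ) ≤ jap ξ := by
    have h1 := Real.sqrt_le_sqrt (show (1:ℝ) ≤ 1 + ‖ξ‖ ^ 2 from le_add_of_nonneg_right (sq_nonneg _))
    rwa [Real.sqrt_one] at h1
  have hjap0 : (0:ℝ) < jap ξ := lt_of_lt_of_le one_pos hjap
  have hgap : ∀ i j : Fin m, i < j → ω ε * jap ξ ≤ lam j ε t ξ - lam i ε t ξ := by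
    intro i j hij
    have hij' : (i:ℕ) < (j:ℕ) := hij
    have h1 : (i:ℕ) + 1 < m := lt_of_le_of_lt (Nat.succ_le_of_lt hij') j.2
    have h2 := hsep i ⟨(i:ℕ)+1, h1⟩ rfl ε hε t ht ξ
    have h3 : lam ⟨(i:ℕ)+1, h1⟩ ε t ξ ≤ lam j ε t ξ :=
      hord ⟨(i:ℕ)+1, h1⟩ j (by simpa [Fin.le_def] using Nat.succ_le_of_lt hij') ε hε t ht ξ
    linarith
  have hdlb : ω ε ^ (m ^ 2 - m) ≤ (S ε t ξ).det := by
    rw [hS_det ε hε t ht ξ]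
    have hstep : ∀ p ∈ Finset.univ.filter (fun p : Fin m × Fin m => p.1 < p.2),
        ω ε ^ 2 ≤ (lam p.2 ε t ξ - lam p.1 ε t ξ) ^ 2 / jap ξ ^ 2 := by
      intro p hp
      have hlt : p.1 < p.2 := (Finset.mem_filter.mp hp).2
      have hg := hgap p.1 p.2 hlt
      rw [le_div_iff₀ (by positivity)]
      have h5 : (ω ε * jap ξ) ^ 2 ≤ (lam p.2 ε t ξ - lam p.1 ε t ξ) ^ 2 :=
        pow_le_pow_left₀ (by positivity) hg 2
      calc ω ε ^ 2 * jap ξ ^ 2 = (ω ε * jap ξ) ^ 2 := by ring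
        _ ≤ _ := h5
    calc ω ε ^ (m ^ 2 - m)
        = ∏ _p ∈ Finset.univ.filter (fun p : Fin m × Fin m => p.1 < p.2), ω ε ^ 2 := by
          rw [Finset.prod_const, ← pow_mul]
          congr 1
          exact (card_lt_pairs m).symm
      _ ≤ _ := Finset.prod_le_prod (fun p _ => sq_nonneg _) hstep
  have hq := quad_bounds hm0 (S ε t ξ) (hS_pos ε hε t ht ξ) M hM
      (fun i j => hS_bdd ε hε t ht ξ i j) (ω ε ^ (m ^ 2 - m)) (by positivity) hdlb V
  have hcomm : dotProduct (((S ε t ξ).map Complex.ofReal).mulVec V) (star V)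
      = dotProduct (star V) (((S ε t ξ).map Complex.ofReal) *ᵥ V) :=
    dotProduct_comm _ _
  rw [hcomm]
  constructor
  · have h1 := hq.1
    have heq : ((M * (m:ℝ)) ^ (m - 1))⁻¹ * ω ε ^ (m ^ 2 - m) * ∑ i, ‖V i‖ ^ 2
        = (ω ε ^ (m ^ 2 - m) / (M * (m:ℝ)) ^ (m - 1)) * ∑ i, ‖V i‖ ^ 2 := by ring
    rw [heq]
    exact h1
  · exact hq.2
end
end

section
/- Let φ be a Schwartz function on ℝⁿ, and let χ ∈ C^∞(ℝⁿ) be bounded with all derivatives bounded, compactly supported, with χ ≡ 1 on a neighborhood of 0. Assume ω ∈ (0,1) satisfies ω|log ω| ≤ c ω^{1/2} for a fixed c > 0. Then for every q ∈ ℕ there exists c_q > 0, independent of ω and ξ, such that |∫_{ℝⁿ} e^{−iω y·ξ} φ(y) (χ(yω|log ω|) − 1) dy| ≤ c_q ω^{q/2} for all ξ ∈ ℝⁿ and all such ω. -/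
noncomputable section

open MeasureTheory Real Filter Finset

open scoped RealInnerProductSpace

/-- Let `φ` be Schwartz on `ℝⁿ` and let `χ` be smooth, bounded with all
derivatives bounded, compactly supported, `χ ≡ 1` near `0`. If `ω ∈ (0,1)` satisfies
`ω|log ω| ≤ c ω^{1/2}` for a fixed `c > 0`, then for every `q ∈ ℕ` there is `c_q > 0`,
independent of `ω` and `ξ`, with
`|∫ e^{−iω y·ξ} φ(y) (χ(y ω|log ω|) − 1) dy| ≤ c_q ω^{q/2}`. -/
theorem cutoff_error_estimate
    (n : ℕ) (φ : SchwartzMap (Vn n) ℂ)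
    (χ : Vn n → ℝ) (hχ : ContDiff ℝ (⊤ : ℕ∞) χ)
    (hχbdd : ∀ k : ℕ, ∃ Ck : ℝ, ∀ x : Vn n, ‖iteratedFDeriv ℝ k χ x‖ ≤ Ck)
    (hχc : HasCompactSupport χ)
    (hχ1 : ∀ᶠ x in nhds (0 : Vn n), χ x = 1)
    (c : ℝ) (hc : 0 < c) :
    ∀ q : ℕ, ∃ cq > (0:ℝ), ∀ ω : ℝ, ω ∈ Set.Ioo (0:ℝ) 1 →
      ω * |Real.log ω| ≤ c * ω ^ ((1:ℝ)/2) →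
      ∀ ξ : Vn n,
        ‖∫ y : Vn n, Complex.exp (-Complex.I * ((ω * ⟪y, ξ⟫) : ℝ)) * φ y *
            (((χ ((ω * |Real.log ω|) • y) : ℝ) : ℂ) - 1)‖ ≤ cq * ω ^ ((q : ℝ)/2) := by
  intro q
  obtain ⟨M, hM⟩ := hχbdd 0
  have hM' : ∀ x, |χ x| ≤ M := by
    intro x
    have := hM x
    rwa [norm_iteratedFDeriv_zero, Real.norm_eq_abs] at this
  obtain ⟨δ, hδ, hδ1⟩ := Metric.eventually_nhds_iff.mp hχ1
  have hχ0 : χ 0 = 1 := hδ1 (by simpa using hδ)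
  have hM1 : 1 ≤ M := by have := hM' 0; rw [hχ0] at this; simpa using this
  set C : ℝ := (M + 1) / δ ^ q with hCdef
  have hCpos : 0 < C := div_pos (by linarith) (pow_pos hδ q)
  -- pointwise bound on χ - 1
  have key : ∀ z : Vn n, |χ z - 1| ≤ C * ‖z‖ ^ q := by
    intro z
    rcases lt_or_ge ‖z‖ δ with h | h
    · have : χ z = 1 := hδ1 (by simpa [dist_eq_norm] using h)
      simp [this]
      positivity
    · have h1 : |χ z - 1| ≤ M + 1 := by
        have := hM' z
        have := abs_sub_abs_le_abs_sub (χ z) 1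
        calc |χ z - 1| ≤ |χ z| + |1| := abs_sub (χ z) 1
          _ ≤ M + 1 := by simp; linarith [hM' z]
      have h2 : (1:ℝ) ≤ ‖z‖ ^ q / δ ^ q := by
        rw [le_div_iff₀ (pow_pos hδ q)]
        simpa using pow_le_pow_left₀ hδ.le h q
      calc |χ z - 1| ≤ M + 1 := h1
        _ ≤ (M + 1) * (‖z‖ ^ q / δ ^ q) := by
            nlinarith [h2]
        _ = C * ‖z‖ ^ q := by rw [hCdef]; ring
  set I : ℝ := ∫ y : Vn n, ‖y‖ ^ q * ‖φ y‖ with hIdef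
  have hInn : 0 ≤ I := integral_nonneg fun y => by positivity
  refine ⟨C * c ^ q * I + 1, by positivity, ?_⟩
  intro ω hω hωc ξ
  set r : ℝ := ω * |Real.log ω| with hr
  have hr0 : 0 ≤ r := mul_nonneg hω.1.le (abs_nonneg _)
  have hint : Integrable (fun y : Vn n => C * r ^ q * (‖y‖ ^ q * ‖φ y‖)) :=
    (φ.integrable_pow_mul volume q).const_mul _
  have hbound : ∀ y : Vn n,
      ‖Complex.exp (-Complex.I * ((ω * ⟪y, ξ⟫) : ℝ)) * φ y *
        (((χ (r • y) : ℝ) : ℂ) - 1)‖ ≤ C * r ^ q * (‖y‖ ^ q * ‖φ y‖) := by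
    intro y
    rw [norm_mul, norm_mul]
    have he : ‖Complex.exp (-Complex.I * ((ω * ⟪y, ξ⟫) : ℝ))‖ = 1 := by
      rw [Complex.norm_exp]
      simp
    rw [he, one_mul]
    have hnc : ‖(((χ (r • y) : ℝ) : ℂ) - 1)‖ = |χ (r • y) - 1| := by
      rw [show ((1:ℂ)) = ((1:ℝ):ℂ) by norm_num, ← Complex.ofReal_sub,
        Complex.norm_real, Real.norm_eq_abs]
    rw [hnc]
    calc ‖φ y‖ * |χ (r • y) - 1| ≤ ‖φ y‖ * (C * ‖r • y‖ ^ q) := by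
          exact mul_le_mul_of_nonneg_left (key _) (norm_nonneg _)
      _ = C * r ^ q * (‖y‖ ^ q * ‖φ y‖) := by
          rw [norm_smul, Real.norm_eq_abs, abs_of_nonneg hr0, mul_pow]; ring
  have h1 : ‖∫ y : Vn n, Complex.exp (-Complex.I * ((ω * ⟪y, ξ⟫) : ℝ)) * φ y *
      (((χ (r • y) : ℝ) : ℂ) - 1)‖ ≤ C * r ^ q * I := by
    calc _ ≤ ∫ y : Vn n, C * r ^ q * (‖y‖ ^ q * ‖φ y‖) :=
          norm_integral_le_of_norm_le hint (Filter.Eventually.of_forall hbound)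
      _ = C * r ^ q * I := by rw [hIdef, integral_const_mul]
  refine h1.trans ?_
  have hωpow : ω ^ ((q:ℝ)/2) = (ω ^ ((1:ℝ)/2)) ^ q := by
    rw [← Real.rpow_natCast (ω ^ ((1:ℝ)/2)) q, ← Real.rpow_mul hω.1.le]
    ring_nf
  have hrq : r ^ q ≤ c ^ q * ω ^ ((q:ℝ)/2) := by
    rw [hωpow, ← mul_pow]
    exact pow_le_pow_left₀ hr0 hωc q
  have hωq : 0 ≤ ω ^ ((q:ℝ)/2) := Real.rpow_nonneg hω.1.le _
  calc C * r ^ q * I ≤ C * (c ^ q * ω ^ ((q:ℝ)/2)) * I := by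
        have := mul_le_mul_of_nonneg_left hrq hCpos.le
        nlinarith [hInn, hCpos.le]
    _ = (C * c ^ q * I) * ω ^ ((q:ℝ)/2) := by ring
    _ ≤ (C * c ^ q * I + 1) * ω ^ ((q:ℝ)/2) := by nlinarith [hωq]
end
end
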